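/- Let φ ∈ 𝒫. Then φ extends uniquely to a continuous function φ̄ on ℝ₊², given by φ̄(s,0) = s·lim_{t→0⁺} φ(1,t), φ̄(0,t) = t·lim_{s→0⁺} φ(s,1), and φ̄(0,0) = 0, and this extension is continuous on ℝ₊² (the limits exist since φ₀ and φ₁ are non-decreasing and bounded near 0). -/

import Mathlib

open Set Filter Topology

lemma stmt4_aux_cont (f : ℝ → ℝ) (hnn : ∀ u : ℝ, 0 < u → 0 ≤ f u)
    (hmono : ∀ u v : ℝ, 0 < u → u ≤ v → f u ≤ f v)
    (hkey : ∀ c u : ℝ, 1 ≤ c → 0 < u → f (c * u) ≤ c * f u)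
    {u : ℝ} (hu : 0 < u) : ContinuousAt f u := by
  rw [Metric.continuousAt_iff]
  intro ε hε
  have hfu : 0 ≤ f u := hnn u hu
  set δ : ℝ := min (1/2) (ε / (6 * (f u + 1))) with hδdef
  have hδpos : 0 < δ := lt_min (by norm_num) (by positivity)
  have hδhalf : δ ≤ 1/2 := min_le_left _ _
  have hδε : 3 * δ * (f u + 1) ≤ ε / 2 := by
    have h1 : δ ≤ ε / (6 * (f u + 1)) := min_le_right _ _
    have h2 : (0:ℝ) < 6 * (f u + 1) := by positivity
    rw [le_div_iff₀ h2] at h1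
    nlinarith
  refine ⟨δ * u, by positivity, fun {v} hv => ?_⟩
  rw [Real.dist_eq] at hv ⊢
  have habs := abs_lt.1 hv
  have hvpos : 0 < v := by nlinarith [habs.1, habs.2]
  have hv1 : v ≤ (1 + δ) * u := by nlinarith [habs.2]
  have hv2 : u ≤ (1 + 2 * δ) * v := by nlinarith [habs.1]
  have hup : f v ≤ (1 + δ) * f u :=
    (hmono v ((1 + δ) * u) hvpos hv1).trans (hkey (1 + δ) u (by linarith) hu)
  have hlow : f u ≤ (1 + 2 * δ) * f v :=
    (hmono u ((1 + 2 * δ) * v) hu hv2).trans (hkey (1 + 2 * δ) v (by linarith) hvpos)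
  have hfv : 0 ≤ f v := hnn v hvpos
  rw [abs_lt]
  constructor <;> nlinarith

/-- Continuity on `Ici 0` of the extension by the limit value `a` at `0`. -/
lemma stmt4_aux_contOn (f : ℝ → ℝ) (hnn : ∀ u : ℝ, 0 < u → 0 ≤ f u)
    (hmono : ∀ u v : ℝ, 0 < u → u ≤ v → f u ≤ f v)
    (hkey : ∀ c u : ℝ, 1 ≤ c → 0 < u → f (c * u) ≤ c * f u)
    {a : ℝ} (ha : Tendsto f (𝓝[>] (0:ℝ)) (𝓝 a)) :
    ContinuousOn (fun u => if u ≤ 0 then a else f u) (Ici (0:ℝ)) := by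
  set F : ℝ → ℝ := fun u => if u ≤ 0 then a else f u with hF
  intro u hu
  rcases (mem_Ici.mp hu).lt_or_eq with hu' | hu'
  · have hev : f =ᶠ[𝓝 u] F :=
      eventually_of_mem (Ioi_mem_nhds hu') (fun v hv => (if_neg (not_le.2 hv)).symm)
    exact ((stmt4_aux_cont f hnn hmono hkey hu').congr hev).continuousWithinAt
  · subst hu'
    rw [← continuousWithinAt_Ioi_iff_Ici]
    have hF0 : F 0 = a := if_pos le_rfl
    have hev : f =ᶠ[𝓝[>] (0:ℝ)] F :=
      eventually_of_mem self_mem_nhdsWithin (fun v hv => (if_neg (not_le.2 hv)).symm)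
    show Tendsto F (𝓝[>] (0:ℝ)) (𝓝 (F 0))
    rw [hF0]
    exact ha.congr' hev

/-- `φ ∈ 𝒫` extends uniquely to a continuous function on `ℝ₊²` given by
`ψ(s,0) = s·lim_{t→0⁺} φ(1,t)`, `ψ(0,t) = t·lim_{s→0⁺} φ(s,1)`, `ψ(0,0) = 0`. -/
theorem stmt4 (φ : ℝ → ℝ → ℝ)
    (hnonneg : ∀ s t : ℝ, 0 < s → 0 < t → 0 ≤ φ s t)
    (hhom : ∀ l s t : ℝ, 0 < l → 0 < s → 0 < t → φ (l * s) (l * t) = l * φ s t)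
    (hmono0 : ∀ t s s' : ℝ, 0 < t → 0 < s → s ≤ s' → φ s t ≤ φ s' t)
    (hmono1 : ∀ s t t' : ℝ, 0 < s → 0 < t → t ≤ t' → φ s t ≤ φ s t') :
    ∃ a b : ℝ,
      Filter.Tendsto (fun t => φ 1 t) (nhdsWithin 0 (Set.Ioi 0)) (nhds a) ∧
      Filter.Tendsto (fun s => φ s 1) (nhdsWithin 0 (Set.Ioi 0)) (nhds b) ∧
      ∃ ψ : ℝ × ℝ → ℝ,
        ContinuousOn ψ (Set.Ici 0 ×ˢ Set.Ici 0) ∧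
        (∀ s t : ℝ, 0 < s → 0 < t → ψ (s, t) = φ s t) ∧
        (∀ s : ℝ, 0 ≤ s → ψ (s, 0) = s * a) ∧
        (∀ t : ℝ, 0 ≤ t → ψ (0, t) = t * b) ∧
        ψ (0, 0) = 0 ∧
        ∀ ψ' : ℝ × ℝ → ℝ, ContinuousOn ψ' (Set.Ici 0 ×ˢ Set.Ici 0) →
          (∀ s t : ℝ, 0 < s → 0 < t → ψ' (s, t) = φ s t) →
          Set.EqOn ψ ψ' (Set.Ici 0 ×ˢ Set.Ici 0) := by
  classical
  set f : ℝ → ℝ := fun t => φ 1 t with hfdef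
  set g : ℝ → ℝ := fun s => φ s 1 with hgdef
  have hnnf : ∀ u : ℝ, 0 < u → 0 ≤ f u := fun u hu => hnonneg 1 u one_pos hu
  have hmonof : ∀ u v : ℝ, 0 < u → u ≤ v → f u ≤ f v := fun u v hu huv =>
    hmono1 1 u v one_pos hu huv
  have hkeyf : ∀ c u : ℝ, 1 ≤ c → 0 < u → f (c * u) ≤ c * f u := by
    intro c u hc hu
    have hc0 : 0 < c := lt_of_lt_of_le one_pos hc
    have h1 : φ 1 (c * u) ≤ φ c (c * u) := hmono0 (c * u) 1 c (by positivity) one_pos hc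
    have h2 : φ c (c * u) = c * φ 1 u := by
      have := hhom c 1 u hc0 one_pos hu
      rwa [mul_one] at this
    calc f (c * u) = φ 1 (c * u) := rfl
      _ ≤ φ c (c * u) := h1
      _ = c * f u := h2
  have hnng : ∀ u : ℝ, 0 < u → 0 ≤ g u := fun u hu => hnonneg u 1 hu one_pos
  have hmonog : ∀ u v : ℝ, 0 < u → u ≤ v → g u ≤ g v := fun u v hu huv =>
    hmono0 1 u v one_pos hu huv
  have hkeyg : ∀ c u : ℝ, 1 ≤ c → 0 < u → g (c * u) ≤ c * g u := by
    intro c u hc hu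
    have hc0 : 0 < c := lt_of_lt_of_le one_pos hc
    have h1 : φ (c * u) 1 ≤ φ (c * u) c := hmono1 (c * u) 1 c (by positivity) one_pos hc
    have h2 : φ (c * u) c = c * φ u 1 := by
      have := hhom c u 1 hc0 hu one_pos
      rwa [mul_one] at this
    calc g (c * u) = φ (c * u) 1 := rfl
      _ ≤ φ (c * u) c := h1
      _ = c * g u := h2
  have hbddf : BddBelow (f '' Ioi (0:ℝ)) := ⟨0, by rintro y ⟨u, hu, rfl⟩; exact hnnf u hu⟩
  have hbddg : BddBelow (g '' Ioi (0:ℝ)) := ⟨0, by rintro y ⟨u, hu, rfl⟩; exact hnng u hu⟩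
  set a : ℝ := sInf (f '' Ioi (0:ℝ)) with hadef
  set b : ℝ := sInf (g '' Ioi (0:ℝ)) with hbdef
  have ha : Tendsto f (𝓝[>] (0:ℝ)) (𝓝 a) :=
    MonotoneOn.tendsto_nhdsGT (fun u hu v _ huv => hmonof u v hu huv) hbddf
  have hb : Tendsto g (𝓝[>] (0:ℝ)) (𝓝 b) :=
    MonotoneOn.tendsto_nhdsGT (fun u hu v _ huv => hmonog u v hu huv) hbddg
  have hane : (f '' Ioi (0:ℝ)).Nonempty := ⟨f 1, ⟨1, Set.mem_Ioi.2 one_pos, rfl⟩⟩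
  have hbne : (g '' Ioi (0:ℝ)).Nonempty := ⟨g 1, ⟨1, Set.mem_Ioi.2 one_pos, rfl⟩⟩
  have ha0 : 0 ≤ a := le_csInf hane (by rintro y ⟨u, hu, rfl⟩; exact hnnf u hu)
  have hb0 : 0 ≤ b := le_csInf hbne (by rintro y ⟨u, hu, rfl⟩; exact hnng u hu)
  refine ⟨a, b, ha, hb, ?_⟩
  set F : ℝ → ℝ := fun u => if u ≤ 0 then a else f u with hFdef
  set G : ℝ → ℝ := fun u => if u ≤ 0 then b else g u with hGdef
  have hFcont : ContinuousOn F (Ici (0:ℝ)) := stmt4_aux_contOn f hnnf hmonof hkeyf ha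
  have hGcont : ContinuousOn G (Ici (0:ℝ)) := stmt4_aux_contOn g hnng hmonog hkeyg hb
  set ψ : ℝ × ℝ → ℝ := fun p => if 0 < p.1 then p.1 * F (p.2 / p.1) else p.2 * b with hψdef
  set Q : Set (ℝ × ℝ) := Ici (0:ℝ) ×ˢ Ici (0:ℝ) with hQdef
  -- formulas
  have hψφ : ∀ s t : ℝ, 0 < s → 0 < t → ψ (s, t) = φ s t := by
    intro s t hs ht
    have h1 : ψ (s, t) = s * F (t / s) := if_pos hs
    have h2 : F (t / s) = f (t / s) := if_neg (not_le.2 (div_pos ht hs))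
    have h3 : s * φ 1 (t / s) = φ s t := by
      have := hhom s 1 (t / s) hs one_pos (div_pos ht hs)
      rw [mul_one, mul_div_cancel₀ _ (ne_of_gt hs)] at this
      exact this.symm
    rw [h1, h2]; exact h3
  have hψ0t : ∀ t : ℝ, ψ (0, t) = t * b := fun t => if_neg (lt_irrefl 0)
  have hψs0 : ∀ s : ℝ, 0 ≤ s → ψ (s, 0) = s * a := by
    intro s hs
    rcases hs.lt_or_eq with hs' | hs'
    · have h1 : ψ (s, 0) = s * F (0 / s) := if_pos hs'
      rw [h1, zero_div]
      have : F 0 = a := if_pos le_rfl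
      rw [this]
    · rw [← hs', hψ0t 0]; ring
  have h00 : ψ (0, 0) = 0 := by rw [hψ0t 0]; ring
  -- continuity with positive first coordinate
  have hmapsto : MapsTo (fun q : ℝ × ℝ => q.2 / q.1) Q (Ici (0:ℝ)) :=
    fun q hq => mem_Ici.2 (div_nonneg hq.2 hq.1)
  have hcont1 : ∀ p ∈ Q, 0 < p.1 → ContinuousWithinAt ψ Q p := by
    intro p hp hp1
    have hdiv : ContinuousWithinAt (fun q : ℝ × ℝ => q.2 / q.1) Q p :=
      (continuousAt_snd.div continuousAt_fst (ne_of_gt hp1)).continuousWithinAt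
    have hcomp : ContinuousWithinAt (fun q : ℝ × ℝ => F (q.2 / q.1)) Q p :=
      ContinuousWithinAt.comp (f := fun q : ℝ × ℝ => q.2 / q.1) (g := F)
        (hFcont _ (hmapsto hp)) hdiv hmapsto
    have hk : ContinuousWithinAt (fun q : ℝ × ℝ => q.1 * F (q.2 / q.1)) Q p :=
      (continuous_fst.continuousWithinAt).mul hcomp
    have hev : ψ =ᶠ[𝓝[Q] p] fun q : ℝ × ℝ => q.1 * F (q.2 / q.1) := by
      filter_upwards [mem_nhdsWithin_of_mem_nhds
        ((isOpen_lt continuous_const continuous_fst).mem_nhds hp1)] with q hq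
      exact if_pos hq
    exact hk.congr_of_eventuallyEq hev (if_pos hp1)
  -- second representation
  have hχeq : ∀ q ∈ Q, 0 < q.2 → ψ q = q.2 * G (q.1 / q.2) := by
    intro q hq hq2
    rcases (mem_Ici.mp hq.1).lt_or_eq with h1 | h1
    · have hG : G (q.1 / q.2) = g (q.1 / q.2) := if_neg (not_le.2 (div_pos h1 hq2))
      have h3 : q.2 * φ (q.1 / q.2) 1 = φ q.1 q.2 := by
        have := hhom q.2 (q.1 / q.2) 1 hq2 (div_pos h1 hq2) one_pos
        rw [mul_one, mul_div_cancel₀ _ (ne_of_gt hq2)] at this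
        exact this.symm
      calc ψ q = φ q.1 q.2 := hψφ q.1 q.2 h1 hq2
        _ = q.2 * G (q.1 / q.2) := by rw [hG]; exact h3.symm
    · have hq0 : ψ q = q.2 * b := if_neg (by rw [← h1]; exact lt_irrefl 0)
      have hG : G (q.1 / q.2) = b := by rw [← h1, zero_div]; exact if_pos le_rfl
      rw [hq0, hG]
  have hmapsto' : MapsTo (fun q : ℝ × ℝ => q.1 / q.2) Q (Ici (0:ℝ)) :=
    fun q hq => mem_Ici.2 (div_nonneg hq.1 hq.2)
  have hcont2 : ∀ p ∈ Q, 0 < p.2 → ContinuousWithinAt ψ Q p := by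
    intro p hp hp2
    have hdiv : ContinuousWithinAt (fun q : ℝ × ℝ => q.1 / q.2) Q p :=
      (continuousAt_fst.div continuousAt_snd (ne_of_gt hp2)).continuousWithinAt
    have hcomp : ContinuousWithinAt (fun q : ℝ × ℝ => G (q.1 / q.2)) Q p :=
      ContinuousWithinAt.comp (f := fun q : ℝ × ℝ => q.1 / q.2) (g := G)
        (hGcont _ (hmapsto' hp)) hdiv hmapsto'
    have hk : ContinuousWithinAt (fun q : ℝ × ℝ => q.2 * G (q.1 / q.2)) Q p :=
      (continuous_snd.continuousWithinAt).mul hcomp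
    have hev : ψ =ᶠ[𝓝[Q] p] fun q : ℝ × ℝ => q.2 * G (q.1 / q.2) := by
      filter_upwards [self_mem_nhdsWithin, mem_nhdsWithin_of_mem_nhds
        ((isOpen_lt continuous_const continuous_snd).mem_nhds hp2)] with q hqQ hq2
      exact hχeq q hqQ hq2
    exact hk.congr_of_eventuallyEq hev (hχeq p hp hp2)
  -- continuity at the origin
  have hcont0 : ContinuousWithinAt ψ Q (0, 0) := by
    set C : ℝ := φ 1 1 + a + b + 1 with hCdef
    have hφ11 : 0 ≤ φ 1 1 := hnonneg 1 1 one_pos one_pos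
    have hC : 0 ≤ C := by simp only [hCdef]; linarith
    have hub : ∀ q ∈ Q, 0 ≤ ψ q ∧ ψ q ≤ (q.1 + q.2) * C := by
      intro q hq
      have hq1 : (0:ℝ) ≤ q.1 := hq.1
      have hq2 : (0:ℝ) ≤ q.2 := hq.2
      rcases hq1.lt_or_eq with h1 | h1
      · rcases hq2.lt_or_eq with h2 | h2
        · have hψq : ψ q = φ q.1 q.2 := hψφ _ _ h1 h2
          have hm : 0 < q.1 + q.2 := by linarith
          have step1 : φ q.1 q.2 ≤ φ (q.1 + q.2) q.2 :=
            hmono0 q.2 q.1 _ h2 h1 (by linarith)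
          have step2 : φ (q.1 + q.2) q.2 ≤ φ (q.1 + q.2) (q.1 + q.2) :=
            hmono1 _ q.2 _ hm h2 (by linarith)
          have step3 : φ (q.1 + q.2) (q.1 + q.2) = (q.1 + q.2) * φ 1 1 := by
            have := hhom (q.1 + q.2) 1 1 hm one_pos one_pos
            rwa [mul_one] at this
          refine ⟨by rw [hψq]; exact hnonneg _ _ h1 h2, ?_⟩
          rw [hψq]
          have : φ 1 1 ≤ C := by simp only [hCdef]; linarith
          nlinarith [mul_le_mul_of_nonneg_left this (le_of_lt hm)]
        · have hq0 : q = (q.1, 0) := Prod.ext rfl h2.symm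
          rw [hq0, hψs0 q.1 hq1]
          have haC : a ≤ C := by simp only [hCdef]; linarith
          constructor
          · positivity
          · simp only
            nlinarith [mul_le_mul_of_nonneg_left haC hq1]
      · have hq0 : q = (0, q.2) := Prod.ext h1.symm rfl
        rw [hq0, hψ0t q.2]
        have hbC : b ≤ C := by simp only [hCdef]; linarith
        constructor
        · positivity
        · simp only
          nlinarith [mul_le_mul_of_nonneg_left hbC hq2]
    have hbound : Tendsto (fun q : ℝ × ℝ => (q.1 + q.2) * C) (𝓝[Q] ((0:ℝ), (0:ℝ))) (𝓝 0) := by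
      have hcc : Continuous fun q : ℝ × ℝ => (q.1 + q.2) * C :=
        (continuous_fst.add continuous_snd).mul continuous_const
      have := (hcc.tendsto ((0:ℝ), (0:ℝ))).mono_left (nhdsWithin_le_nhds (s := Q))
      simpa using this
    have hsq : Tendsto ψ (𝓝[Q] ((0:ℝ), (0:ℝ))) (𝓝 0) :=
      tendsto_of_tendsto_of_tendsto_of_le_of_le' tendsto_const_nhds hbound
        (eventually_of_mem self_mem_nhdsWithin fun q hq => (hub q hq).1)
        (eventually_of_mem self_mem_nhdsWithin fun q hq => (hub q hq).2)
    show Tendsto ψ (𝓝[Q] ((0:ℝ), (0:ℝ))) (𝓝 (ψ (0, 0)))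
    rw [h00]; exact hsq
  have hcontOn : ContinuousOn ψ Q := by
    intro p hp
    rcases (mem_Ici.mp hp.1).lt_or_eq with h1 | h1
    · exact hcont1 p hp h1
    · rcases (mem_Ici.mp hp.2).lt_or_eq with h2 | h2
      · exact hcont2 p hp h2
      · have hp0 : p = ((0:ℝ), (0:ℝ)) := Prod.ext h1.symm h2.symm
        rw [hp0]; exact hcont0
  refine ⟨ψ, hcontOn, hψφ, hψs0, fun t _ => hψ0t t, h00, ?_⟩
  -- uniqueness
  intro ψ' hψ'c hψ'φ p hp
  set O : Set (ℝ × ℝ) := Ioi (0:ℝ) ×ˢ Ioi (0:ℝ) with hOdef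
  have hOQ : O ⊆ Q := prod_mono Ioi_subset_Ici_self Ioi_subset_Ici_self
  have hpc : p ∈ closure O := by
    rw [hOdef, closure_prod_eq, closure_Ioi]; exact hp
  haveI hne : (𝓝[O] p).NeBot := mem_closure_iff_nhdsWithin_neBot.1 hpc
  have h1 : Tendsto ψ (𝓝[O] p) (𝓝 (ψ p)) :=
    (hcontOn p hp).mono_left (nhdsWithin_mono _ hOQ)
  have h2 : Tendsto ψ' (𝓝[O] p) (𝓝 (ψ' p)) :=
    (hψ'c p hp).mono_left (nhdsWithin_mono _ hOQ)
  have heq : ψ =ᶠ[𝓝[O] p] ψ' :=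
    eventually_of_mem self_mem_nhdsWithin fun q hq =>
      (hψφ q.1 q.2 hq.1 hq.2).trans (hψ'φ q.1 q.2 hq.1 hq.2).symm
  exact tendsto_nhds_unique (h1.congr' heq) h2
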